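/- Let u₁, u₂ ∈ ℝⁿ, let y₁, y₂ ≥ 0 with y₁ + y₂ = 1, let ū = y₁u₁ + y₂u₂, let T₁, T₂ > 0 and ϑ ≥ 0. Define the velocity relaxation terms M₁ = ϑ(u₂ − u₁) and M₂ = ϑ(u₁ − u₂). Then the entropy production due to velocity relaxation satisfies (1/T₁)⟨ū − u₁, M₁⟩ + (1/T₂)⟨ū − u₂, M₂⟩ = ϑ(y₂/T₁ + y₁/T₂)‖u₁ − u₂‖² ≥ 0. -/

import Mathlib

/-- Entropy production due to velocity relaxation is
`ϑ(y₂/T₁ + y₁/T₂)‖u₁ − u₂‖² ≥ 0`. -/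
theorem velocity_relaxation_entropy_production {n : ℕ}
    (u₁ u₂ : EuclideanSpace ℝ (Fin n))
    (y₁ y₂ : ℝ) (hy₁ : 0 ≤ y₁) (hy₂ : 0 ≤ y₂) (hy : y₁ + y₂ = 1)
    (ub : EuclideanSpace ℝ (Fin n)) (hub : ub = y₁ • u₁ + y₂ • u₂)
    (T₁ T₂ ϑ : ℝ) (hT₁ : 0 < T₁) (hT₂ : 0 < T₂) (hϑ : 0 ≤ ϑ)
    (M₁ M₂ : EuclideanSpace ℝ (Fin n))
    (hM₁ : M₁ = ϑ • (u₂ - u₁)) (hM₂ : M₂ = ϑ • (u₁ - u₂)) :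
    (1 / T₁) * (inner ℝ (ub - u₁) M₁ : ℝ) + (1 / T₂) * (inner ℝ (ub - u₂) M₂ : ℝ)
        = ϑ * (y₂ / T₁ + y₁ / T₂) * ‖u₁ - u₂‖ ^ 2
      ∧ 0 ≤ ϑ * (y₂ / T₁ + y₁ / T₂) * ‖u₁ - u₂‖ ^ 2 := by
  have h1 : ub - u₁ = y₂ • (u₂ - u₁) := by
    rw [hub, smul_sub]
    have : y₁ • u₁ = u₁ - y₂ • u₁ := by
      rw [eq_sub_iff_add_eq, ← add_smul, hy, one_smul]
    rw [this]; abel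
  have h2 : ub - u₂ = y₁ • (u₁ - u₂) := by
    rw [hub, smul_sub]
    have : y₂ • u₂ = u₂ - y₁ • u₂ := by
      rw [eq_sub_iff_add_eq, ← add_smul, add_comm, hy, one_smul]
    rw [this]; abel
  have key : (1 / T₁) * (inner ℝ (ub - u₁) M₁ : ℝ) + (1 / T₂) * (inner ℝ (ub - u₂) M₂ : ℝ)
      = ϑ * (y₂ / T₁ + y₁ / T₂) * ‖u₁ - u₂‖ ^ 2 := by
    rw [h1, h2, hM₁, hM₂, real_inner_smul_left, real_inner_smul_left,
      real_inner_smul_right, real_inner_smul_right,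
      real_inner_self_eq_norm_sq, real_inner_self_eq_norm_sq, norm_sub_rev u₂ u₁]
    ring
  refine ⟨key, ?_⟩
  have : 0 ≤ y₂ / T₁ + y₁ / T₂ := by positivity
  positivity
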